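/- Suppose nonnegative reals (λ_i)_{i∈I} and (x_{ij})_{(i,j)∈E} satisfy: for every convex f : [0,1] → ℝ with f(0) = 0 and every j, Σ_i λ_i f(x_{ij}/λ_i) ≤ ∫_0^{−ln(1−x_j)} f(e^{−λ}) dλ, where x_j = Σ_i x_{ij} < 1. Then for every j, Σ_i max(x_{ij} − λ_i/2, 0) ≤ (1 − ln 2)/2. -/

import Mathlib

open Finset intervalIntegral

lemma cj_aux_convex : ConvexOn ℝ (Set.Icc (0:ℝ) 1) (fun t => max (t - 1/2) 0) := by
  have h1 : ConvexOn ℝ (Set.Icc (0:ℝ) 1) (fun t => t - 1/2) := by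
    exact (convexOn_id (convex_Icc 0 1)).sub (concaveOn_const _ (convex_Icc 0 1))
  have h2 : ConvexOn ℝ (Set.Icc (0:ℝ) 1) (fun _ => (0:ℝ)) := convexOn_const _ (convex_Icc 0 1)
  simpa [Pi.sup_def] using h1.sup h2

lemma cj_aux_int (T : ℝ) (hT : 0 ≤ T) :
    ∫ l in (0:ℝ)..T, max (Real.exp (-l) - 1/2) 0 ≤ (1 - Real.log 2) / 2 := by
  set g : ℝ → ℝ := fun l => max (Real.exp (-l) - 1/2) 0 with hg
  have hgc : Continuous g := (Continuous.sub (Real.continuous_exp.comp continuous_neg) continuous_const).max continuous_const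
  have hln2 : (0:ℝ) ≤ Real.log 2 := Real.log_nonneg (by norm_num)
  set M := max T (Real.log 2) with hM
  have h1 : ∫ l in (0:ℝ)..T, g l ≤ ∫ l in (0:ℝ)..M, g l := by
    apply intervalIntegral.integral_mono_interval (le_refl (0:ℝ)) hT (le_max_left _ _)
    · filter_upwards with l
      exact le_max_right _ _
    · exact (hgc.intervalIntegrable _ _)
  have h2 : ∫ l in (0:ℝ)..M, g l = (∫ l in (0:ℝ)..Real.log 2, g l) + ∫ l in (Real.log 2)..M, g l := by
    rw [intervalIntegral.integral_add_adjacent_intervals (hgc.intervalIntegrable _ _) (hgc.intervalIntegrable _ _)]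
  have h3 : ∫ l in (Real.log 2)..M, g l = 0 := by
    have : ∫ l in (Real.log 2)..M, g l = ∫ l in (Real.log 2)..M, (0:ℝ) := by
      apply intervalIntegral.integral_congr
      intro l hl
      rw [Set.uIcc_of_le (le_max_right _ _)] at hl
      have h12 : Real.exp (-l) ≤ 1/2 := by
        calc Real.exp (-l) ≤ Real.exp (-Real.log 2) := Real.exp_le_exp.mpr (by linarith [hl.1])
        _ = 1/2 := by rw [Real.exp_neg, Real.exp_log (by norm_num)]; norm_num
      simp only [hg]
      rw [max_eq_right (by linarith)]
    simp [this]
  have h4 : ∫ l in (0:ℝ)..Real.log 2, g l = ∫ l in (0:ℝ)..Real.log 2, (Real.exp (-l) - 1/2) := by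
    apply intervalIntegral.integral_congr
    intro l hl
    rw [Set.uIcc_of_le hln2] at hl
    have h12 : (1:ℝ)/2 ≤ Real.exp (-l) := by
      calc (1:ℝ)/2 = Real.exp (-Real.log 2) := by rw [Real.exp_neg, Real.exp_log (by norm_num)]; norm_num
      _ ≤ Real.exp (-l) := Real.exp_le_exp.mpr (by linarith [hl.2])
    simp only [hg]
    rw [max_eq_left (by linarith)]
  have h5 : ∫ l in (0:ℝ)..Real.log 2, (Real.exp (-l) - 1/2) = (1 - Real.log 2)/2 := by
    rw [intervalIntegral.integral_sub ((by fun_prop : Continuous fun l : ℝ => Real.exp (-l)).intervalIntegrable _ _) (intervalIntegrable_const)]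
    have : ∫ l in (0:ℝ)..Real.log 2, Real.exp (-l) = ∫ l in (-Real.log 2)..(-(0:ℝ)), Real.exp l := by
      rw [← intervalIntegral.integral_comp_neg Real.exp]
    rw [this, integral_exp, intervalIntegral.integral_const]
    rw [neg_zero, Real.exp_zero, Real.exp_neg, Real.exp_log (by norm_num : (0:ℝ) < 2)]
    norm_num
    ring
  linarith

theorem converse_jensen_corollary
    {I J : Type*} [Fintype I] [Fintype J]
    (lam : I → ℝ) (hlam : ∀ i, 0 < lam i)
    (x : I → J → ℝ) (hx : ∀ i j, 0 ≤ x i j)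
    (hxj : ∀ j, ∑ i, x i j < 1)
    (hCJ : ∀ f : ℝ → ℝ, ConvexOn ℝ (Set.Icc 0 1) f → f 0 = 0 → ∀ j,
      ∑ i, lam i * f (x i j / lam i) ≤
        ∫ l in (0:ℝ)..(-Real.log (1 - ∑ i, x i j)), f (Real.exp (-l))) :
    ∀ j, ∑ i, max (x i j - lam i / 2) 0 ≤ (1 - Real.log 2) / 2 := by
  intro j
  have h := hCJ (fun t => max (t - 1/2) 0) cj_aux_convex (by norm_num) j
  have heq : ∀ i, lam i * max (x i j / lam i - 1/2) 0 = max (x i j - lam i / 2) 0 := by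
    intro i
    have hl := hlam i
    rw [mul_max_of_nonneg _ _ hl.le, mul_zero, mul_sub, mul_div_cancel₀ _ hl.ne']
    ring_nf
  rw [Finset.sum_congr rfl (fun i _ => heq i)] at h
  have hT : 0 ≤ -Real.log (1 - ∑ i, x i j) := by
    rw [neg_nonneg]
    apply Real.log_nonpos
    · have : 0 ≤ ∑ i, x i j := Finset.sum_nonneg fun i _ => hx i j
      linarith [hxj j]
    · linarith [Finset.sum_nonneg (fun i (_ : i ∈ Finset.univ) => hx i j)]
  exact h.trans (cj_aux_int _ hT)
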